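/- Let q = p^k be a power of a prime p and let (C_x)_{x∈𝒳} be a random code in 𝔽_q^n that is ε-almost dual universal₂ with minimum dimension t, i.e., dim C_x ≥ t for all x and Pr_X[y ∈ C_X^⊥] ≤ ε·q^{−t} for every y ∈ 𝔽_q^n ∖ {0}. Then the ensemble (W_{C_x})_{x∈𝒳}, where W_{C_x} is uniformly distributed on C_x, is √(ε·q^{−t})-biased: for every y ∈ 𝔽_q^n ∖ {0}, E_X |E_{W_{C_X}} ω_p^{(y·W_{C_X})}|² ≤ ε·q^{−t}. -/

import Mathlib

open Real Finset Filter

attribute [local instance] Classical.propDecidable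

namespace Hayashi

def IsSubDist {S : Type*} [Fintype S] (P : S → ℝ) : Prop :=
  (∀ x, 0 ≤ P x) ∧ ∑ x, P x ≤ 1

def IsDist {S : Type*} [Fintype S] (P : S → ℝ) : Prop :=
  (∀ x, 0 ≤ P x) ∧ ∑ x, P x = 1

variable {A E : Type*} [Fintype A] [Fintype E]

noncomputable def margE (P : A × E → ℝ) (e : E) : ℝ := ∑ a, P (a, e)

noncomputable def margNorm (P : A × E → ℝ) (e : E) : ℝ := margE P e / ∑ e', margE P e'

noncomputable def l1 (P P' : A × E → ℝ) : ℝ := ∑ a, ∑ e, |P (a, e) - P' (a, e)|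

noncomputable def eta (x y : ℝ) : ℝ := -x * Real.log x + x * y

noncomputable def condRenyi (P : A × E → ℝ) (Q : E → ℝ) (s : ℝ) : ℝ :=
  (-1 / s) * Real.log (∑ a, ∑ e, P (a, e) ^ (1 + s) * Q e ^ (-s))

noncomputable def condRenyiUp (P : A × E → ℝ) (s : ℝ) : ℝ :=
  sSup {x | ∃ Q : E → ℝ, IsDist Q ∧ (∀ e, 0 < Q e) ∧ x = condRenyi P Q s}

noncomputable def condRenyiDown (P : A × E → ℝ) (s : ℝ) : ℝ :=
  condRenyi P (margNorm P) s

noncomputable def condEnt (P : A × E → ℝ) : ℝ :=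
  -∑ a, ∑ e, P (a, e) * Real.log (P (a, e) / margE P e)

noncomputable def H2cond (P : A × E → ℝ) (Q : E → ℝ) : ℝ :=
  -Real.log (∑ a, ∑ e, P (a, e) ^ 2 / Q e)

noncomputable def d2cond (P : A × E → ℝ) (Q : E → ℝ) : ℝ :=
  ∑ a, ∑ e, (P (a, e) - margE P e / (Fintype.card A : ℝ)) ^ 2 / Q e

noncomputable def d1' (P : A × E → ℝ) : ℝ :=
  ∑ a, ∑ e, |P (a, e) - margE P e / (Fintype.card A : ℝ)|

noncomputable def Iprime (P : A × E → ℝ) : ℝ :=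
  ∑ a, ∑ e, P (a, e) * Real.log (P (a, e) * (Fintype.card A : ℝ) / margE P e)

noncomputable def Hmin (P : A × E → ℝ) (Q : E → ℝ) : ℝ :=
  -Real.log (sSup {r | ∃ a e, 0 < Q e ∧ r = P (a, e) / Q e})

noncomputable def D2div {E : Type*} [Fintype E] (P Q : E → ℝ) : ℝ :=
  Real.log (∑ e, P e ^ 2 / Q e)

noncomputable def pushHash {B : Type*} (f : A → B) (P : A × E → ℝ) : B × E → ℝ :=
  fun be => ∑ a, (if f a = be.1 then P (a, be.2) else 0)

noncomputable def Delta_d2 (M ε : ℝ) (P : A × E → ℝ) : ℝ :=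
  sInf {x | ∃ (Q : E → ℝ) (P' : A × E → ℝ), IsDist Q ∧ (∀ e, 0 < Q e) ∧ IsSubDist P' ∧
    x = 2 * l1 P P' + Real.sqrt ε * Real.sqrt M * Real.exp (-H2cond P' Q / 2)}

noncomputable def Delta_I2 (M ε : ℝ) (P : A × E → ℝ) : ℝ :=
  sInf {x | ∃ P' : A × E → ℝ, IsSubDist P' ∧ (∀ e, margE P' e ≤ margE P e) ∧
    x = eta (l1 P P') (Real.log M) + ε * M * Real.exp (-H2cond P' (margE P))}

noncomputable def Delta_dmin (M ε : ℝ) (P : A × E → ℝ) : ℝ :=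
  sInf {x | ∃ (Q : E → ℝ) (P' : A × E → ℝ), IsDist Q ∧ (∀ e, 0 < Q e) ∧ IsSubDist P' ∧
    x = 2 * l1 P P' + Real.sqrt ε * Real.sqrt M * Real.exp (-Hmin P' Q / 2)}

noncomputable def Delta_Imin (M ε : ℝ) (P : A × E → ℝ) : ℝ :=
  sInf {x | ∃ P' : A × E → ℝ, IsSubDist P' ∧ (∀ e, margE P' e ≤ margE P e) ∧
    x = eta (l1 P P') (Real.log M) + ε * M * Real.exp (-Hmin P' (margE P))}

noncomputable def DeltaBar_Imin (M ε : ℝ) (P : A × E → ℝ) : ℝ :=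
  sInf {x | ∃ P' : A × E → ℝ, IsSubDist P' ∧ (∀ e, margE P' e ≤ margE P e) ∧
    x = eta (l1 P P') (Real.log M) + Real.log (1 + ε * M * Real.exp (-Hmin P' (margE P)))}

noncomputable def Pn (P : A × E → ℝ) (n : ℕ) : (Fin n → A) × (Fin n → E) → ℝ :=
  fun ae => ∏ i, P (ae.1 i, ae.2 i)

noncomputable def omg (p : ℕ) (t : ZMod p) : ℂ :=
  Complex.exp (2 * Real.pi * Complex.I * (t.val : ℂ) / (p : ℂ))

noncomputable def unifOn {n : ℕ} {F : Type*} [Field F] [Fintype F]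
    (C : Submodule F (Fin n → F)) : (Fin n → F) → ℝ :=
  fun w => if w ∈ C then (Nat.card C : ℝ)⁻¹ else 0


lemma omg_eq_pow (p : ℕ) (t : ZMod p) :
    omg p t = Complex.exp (2 * Real.pi * Complex.I / p) ^ t.val := by
  rw [← Complex.exp_nat_mul, omg]
  ring_nf

lemma omg_add (p : ℕ) [Fact p.Prime] (s t : ZMod p) :
    omg p (s + t) = omg p s * omg p t := by
  have hp : p ≠ 0 := (Fact.out : p.Prime).ne_zero
  have hprim := Complex.isPrimitiveRoot_exp p hp
  have h1 : Complex.exp (2 * Real.pi * Complex.I / p) ^ p = 1 := hprim.pow_eq_one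
  rw [omg_eq_pow, omg_eq_pow, omg_eq_pow, ← pow_add, ZMod.val_add]
  conv_rhs => rw [← Nat.mod_add_div (s.val + t.val) p]
  rw [pow_add, pow_mul, h1, one_pow, mul_one]

lemma omg_zero (p : ℕ) [Fact p.Prime] : omg p 0 = 1 := by
  simp [omg]

lemma omg_ne_one (p : ℕ) [Fact p.Prime] (t : ZMod p) (ht : t ≠ 0) : omg p t ≠ 1 := by
  have hp : p ≠ 0 := (Fact.out : p.Prime).ne_zero
  have hprim := Complex.isPrimitiveRoot_exp p hp
  rw [omg_eq_pow]
  exact hprim.pow_ne_one_of_pos_of_lt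
    (fun h => ht (by rwa [← ZMod.val_eq_zero])) (ZMod.val_lt t)

/-- Lemma `Lem6-0` of the paper: an `ε`-almost dual universal₂ random code with
minimum dimension `t` yields, via uniform distributions on the codes, a
`√(ε·q^{-t})`-biased ensemble of random variables on `𝔽_q^n`. -/
theorem statement4
    (p k n q : ℕ) [Fact p.Prime] (hk : 0 < k) (hq : q = p ^ k)
    (F : Type*) [Field F] [Fintype F] (hF : Fintype.card F = q)
    (B : F → F → ZMod p)
    (hB1 : ∀ x y z : F, B (x + y) z = B x z + B y z)
    (hB2 : ∀ x y z : F, B x (y + z) = B x y + B x z)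
    (hBl : ∀ x : F, (∀ y, B x y = 0) → x = 0)
    (hBr : ∀ y : F, (∀ x, B x y = 0) → y = 0)
    (X : Type*) [Fintype X] (μ : X → ℝ) (hμ : IsDist μ)
    (C : X → Submodule F (Fin n → F)) (t : ℕ) (ε : ℝ)
    (hdim : ∀ x, t ≤ Module.finrank F (C x))
    (hdual : ∀ y : Fin n → F, y ≠ 0 →
      (∑ x, (if ∀ c ∈ C x, (∑ j, B (y j) (c j)) = 0 then μ x else 0)) ≤
        ε / (q : ℝ) ^ t) :
    ∀ y : Fin n → F, y ≠ 0 →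
      ∑ x, μ x *
          Complex.normSq (∑ w, (unifOn (C x) w : ℂ) * omg p (∑ j, B (y j) (w j))) ≤
        ε / (q : ℝ) ^ t := by
  intro y hy
  have key : ∀ x : X,
      μ x * Complex.normSq (∑ w, (unifOn (C x) w : ℂ) * omg p (∑ j, B (y j) (w j)))
        = if ∀ c ∈ C x, (∑ j, B (y j) (c j)) = 0 then μ x else 0 := by
    intro x
    set φ : (Fin n → F) → ZMod p := fun w => ∑ j, B (y j) (w j) with hφdef
    have hφ : ∀ u v, φ (u + v) = φ u + φ v := by
      intro u v
      simp only [hφdef, Pi.add_apply, hB2]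
      rw [Finset.sum_add_distrib]
    have hN : (0:ℕ) < Nat.card (C x) := Nat.card_pos
    have hS : (∑ w, (unifOn (C x) w : ℂ) * omg p (φ w))
        = (Nat.card (C x) : ℂ)⁻¹ * ∑ w : C x, omg p (φ ↑w) := by
      have h1 : ∀ w, (unifOn (C x) w : ℂ) * omg p (φ w)
          = if w ∈ C x then (Nat.card (C x) : ℂ)⁻¹ * omg p (φ w) else 0 := by
        intro w
        by_cases hw : w ∈ C x <;> simp [unifOn, hw]
      rw [Finset.sum_congr rfl (fun w _ => h1 w), ← Finset.sum_filter,
        Finset.sum_subtype (p := (· ∈ C x)) (Finset.univ.filter (· ∈ C x))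
          (by intro w; simp) (fun w => (Nat.card (C x) : ℂ)⁻¹ * omg p (φ w)),
        ← Finset.mul_sum]
    by_cases hc : ∀ c ∈ C x, (∑ j, B (y j) (c j)) = 0
    · have hT : (∑ w : C x, omg p (φ ↑w)) = (Nat.card (C x) : ℂ) := by
        have : ∀ w : C x, omg p (φ ↑w) = 1 := by
          intro w
          rw [show φ ↑w = 0 from hc ↑w w.2, omg_zero]
        rw [Finset.sum_congr rfl (fun w _ => this w)]
        simp [Nat.card_eq_fintype_card]
      rw [if_pos hc, hS, hT, inv_mul_cancel₀ (by exact_mod_cast hN.ne')]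
      simp
    · push_neg at hc
      obtain ⟨c, hcC, hcne⟩ := hc
      have hT : (∑ w : C x, omg p (φ ↑w)) = 0 := by
        have hstep : omg p (φ c) * (∑ w : C x, omg p (φ ↑w))
            = ∑ w : C x, omg p (φ ↑w) := by
          rw [Finset.mul_sum]
          refine Fintype.sum_equiv (Equiv.addLeft (⟨c, hcC⟩ : C x)) _ _ ?_
          intro w
          rw [← omg_add, ← hφ]
          rfl
        have := sub_eq_zero.mpr hstep
        rw [show omg p (φ c) * (∑ w : C x, omg p (φ ↑w)) - (∑ w : C x, omg p (φ ↑w))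
            = (omg p (φ c) - 1) * (∑ w : C x, omg p (φ ↑w)) by ring] at this
        rcases mul_eq_zero.mp this with h | h
        · exact absurd (by linear_combination h) (omg_ne_one p _ hcne)
        · exact h
      rw [if_neg (by push_neg; exact ⟨c, hcC, hcne⟩), hS, hT, mul_zero]
      simp
  calc ∑ x, μ x * Complex.normSq (∑ w, (unifOn (C x) w : ℂ) * omg p (∑ j, B (y j) (w j)))
      = ∑ x, (if ∀ c ∈ C x, (∑ j, B (y j) (c j)) = 0 then μ x else 0) :=
        Finset.sum_congr rfl (fun x _ => key x)
    _ ≤ ε / (q : ℝ) ^ t := hdual y hy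

end Hayashi
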